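/- Let a b : α with a ≠ b, and define word relations R, S : List α → Set (List α) by R w = {List.replicate w.length a, List.replicate w.length b} and S w = {List.replicate w.length a}. Then, with respect to the Levenshtein metric, D(R, S) = ⊤. -/

import Mathlib

open scoped Classical

/-- Cost structure for the Levenshtein distance (formerly in Mathlib, `Mathlib.Data.List.EditDistance.Defs`). -/
structure Levenshtein.Cost (α β δ : Type*) where
  delete : α → δ
  insert : β → δ
  substitute : α → β → δ

/-- The default cost structure: every operation costs 1, substituting equal letters costs 0. -/
def Levenshtein.defaultCost {α : Type*} [DecidableEq α] : Levenshtein.Cost α α ℕ where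
  delete _ := 1
  insert _ := 1
  substitute a b := if a = b then 0 else 1

/-- Levenshtein edit distance with cost structure `C` (formerly in Mathlib). -/
def levenshtein {α β δ : Type*} [AddZeroClass δ] [Min δ] (C : Levenshtein.Cost α β δ) :
    List α → List β → δ
  | [], [] => 0
  | [], y :: ys => C.insert y + levenshtein C [] ys
  | x :: xs, [] => C.delete x + levenshtein C xs []
  | x :: xs, y :: ys =>
    min (C.delete x + levenshtein C xs (y :: ys))
      (min (C.insert y + levenshtein C (x :: xs) ys) (C.substitute x y + levenshtein C xs ys))

/-- The domain of a word relation. -/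
def dom {A B : Type*} (R : List A → Set (List B)) : Set (List A) := {u | (R u).Nonempty}

/-- Directed distance between two sets of words. -/
noncomputable def dirDist {B : Type*} (d : List B → List B → ℕ∞) (L L' : Set (List B)) : ℕ∞ :=
  ⨆ v ∈ L, ⨅ v' ∈ L', d v v'

/-- Hausdorff distance between two sets of words. -/
noncomputable def hausDist {B : Type*} (d : List B → List B → ℕ∞) (L L' : Set (List B)) : ℕ∞ :=
  max (dirDist d L L') (dirDist d L' L)

/-- Distance between two word relations. -/
noncomputable def relDist {A B : Type*} (d : List B → List B → ℕ∞)
    (R S : List A → Set (List B)) : ℕ∞ :=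
  if dom R = dom S then ⨆ u ∈ dom R, hausDist d (R u) (S u) else ⊤

@[simp] lemma levenshtein_nil_nil {α β δ : Type*} [AddZeroClass δ] [Min δ]
    (C : Levenshtein.Cost α β δ) : levenshtein C [] [] = 0 := by
  simp only [levenshtein]

lemma levenshtein_nil_cons {α β δ : Type*} [AddZeroClass δ] [Min δ]
    (C : Levenshtein.Cost α β δ) (y : β) (ys : List β) :
    levenshtein C [] (y :: ys) = C.insert y + levenshtein C [] ys := by
  simp only [levenshtein]

lemma levenshtein_cons_nil {α β δ : Type*} [AddZeroClass δ] [Min δ]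
    (C : Levenshtein.Cost α β δ) (x : α) (xs : List α) :
    levenshtein C (x :: xs) [] = C.delete x + levenshtein C xs [] := by
  simp only [levenshtein]

lemma levenshtein_cons_cons {α β δ : Type*} [AddZeroClass δ] [Min δ]
    (C : Levenshtein.Cost α β δ) (x : α) (xs : List α) (y : β) (ys : List β) :
    levenshtein C (x :: xs) (y :: ys) =
      min (C.delete x + levenshtein C xs (y :: ys))
        (min (C.insert y + levenshtein C (x :: xs) ys) (C.substitute x y + levenshtein C xs ys)) := by
  simp only [levenshtein]

@[simp] lemma Levenshtein.defaultCost_delete {α : Type*} [DecidableEq α] (a : α) :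
    (Levenshtein.defaultCost : Levenshtein.Cost α α ℕ).delete a = 1 := rfl

@[simp] lemma Levenshtein.defaultCost_insert {α : Type*} [DecidableEq α] (a : α) :
    (Levenshtein.defaultCost : Levenshtein.Cost α α ℕ).insert a = 1 := rfl

lemma levRep {α : Type*} [DecidableEq α] {a b : α} (hab : a ≠ b) :
    ∀ m n : ℕ, levenshtein Levenshtein.defaultCost
      (List.replicate m b) (List.replicate n a) = max m n := by
  intro m
  induction m with
  | zero =>
    intro n
    induction n with
    | zero => simp
    | succ n ih =>
      simp only [Nat.zero_max] at ih ⊢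
      rw [List.replicate_zero] at ih ⊢
      rw [List.replicate_succ, levenshtein_nil_cons, ih]
      simp [Nat.add_comm]
  | succ m ihm =>
    intro n
    induction n with
    | zero =>
      have := ihm 0
      simp only [List.replicate_zero] at this ⊢
      simp only [List.replicate_succ, levenshtein_cons_nil, this]
      simp; omega
    | succ n ihn =>
      rw [List.replicate_succ, List.replicate_succ, levenshtein_cons_cons,
        ← List.replicate_succ, ← List.replicate_succ]
      rw [ihm, ihm, ihn]
      simp [Levenshtein.defaultCost, Ne.symm hab]
      omega

lemma ennat_top {x : ℕ∞} (h : ∀ n : ℕ, (n : ℕ∞) ≤ x) : x = ⊤ := by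
  cases x with
  | top => rfl
  | coe m => exact absurd (h (m+1)) (by exact_mod_cast Nat.not_succ_le_self m)

theorem stmt_12 {α : Type*} [DecidableEq α] (a b : α) (hab : a ≠ b)
    (R S : List α → Set (List α))
    (hR : ∀ w, R w = {List.replicate w.length a, List.replicate w.length b})
    (hS : ∀ w, S w = {List.replicate w.length a}) :
    relDist (fun v v' => ((levenshtein Levenshtein.defaultCost v v' : ℕ) : ℕ∞)) R S = ⊤ := by
  have hdom : dom R = dom S := by
    ext u
    simp [dom, hR, hS]
  rw [relDist, if_pos hdom]
  apply ennat_top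
  intro n
  set u : List α := List.replicate n a with hu
  have hmem : u ∈ dom R := by simp [dom, hR]
  have hlen : u.length = n := List.length_replicate
  have h1 : (n : ℕ∞) ≤ hausDist (fun v v' => ((levenshtein Levenshtein.defaultCost v v' : ℕ) : ℕ∞)) (R u) (S u) := by
    refine le_trans ?_ (le_max_left _ _)
    rw [dirDist, hR, hS, hlen]
    refine le_trans ?_ (le_iSup₂ (f := fun v _ => ⨅ v' ∈ ({List.replicate n a} : Set (List α)), ((levenshtein Levenshtein.defaultCost v v' : ℕ) : ℕ∞)) (List.replicate n b) (by simp))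
    simp [levRep hab]
  exact le_trans h1 (le_iSup₂ (f := fun u _ => hausDist _ (R u) (S u)) u hmem)
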